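/- Suppose the martingale (W_n)_{n≥0} is uniformly integrable. Then there exist ε > 0 and η > 0 such that for all t > 1 and all n ∈ ℕ, ℙ(M_n > t) ≤ η^{−1} ℙ(W_n > t ε), where M_n := max_{0 ≤ j ≤ n} W_j. -/

import Mathlib

set_option linter.unusedSectionVars false
set_option linter.unusedVariables false
set_option linter.unnecessarySimpa false
set_option linter.unreachableTactic false
set_option linter.unusedTactic false
set_option maxHeartbeats 1000000


open MeasureTheory ProbabilityTheory Filter Topology

noncomputable section

namespace DirectedPolymer

variable {Ω : Type*} [MeasurableSpace Ω]

/-- The nearest-neighbor step in `ℤ^d` in direction `e.1`, forward if `e.2 = true`,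
backward otherwise. -/
def step (d : ℕ) (e : Fin d × Bool) : Fin d → ℤ :=
  Pi.single e.1 (if e.2 then 1 else -1)

/-- The position, after `k` steps, of the nearest-neighbor path started at the origin whose
successive steps are encoded by `σ`. -/
def walkPos {d n : ℕ} (σ : Fin n → Fin d × Bool) (k : ℕ) : Fin d → ℤ :=
  ∑ j : Fin n, if (j : ℕ) < k then step d (σ j) else 0

/-- The logarithmic moment generating function `λ(β) = log E[exp (β ω(1,0))]`. -/
def logMGF {d : ℕ} (P : Measure Ω) (env : ℕ × (Fin d → ℤ) → Ω → ℝ) (β : ℝ) : ℝ :=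
  Real.log (∫ x, Real.exp (β * env (1, 0) x) ∂P)

/-- The renormalized partition function `W_n` of the directed polymer: the expectation, over the
simple random walk `(S_i)` on `ℤ^d` started at the origin (uniform choice among the `2d`
neighbors at each step), of `exp (β ∑_{i=1}^n ω(i, S_i) - n λ(β))`. -/
def W {d : ℕ} (P : Measure Ω) (env : ℕ × (Fin d → ℤ) → Ω → ℝ) (β : ℝ) (n : ℕ) (x : Ω) : ℝ :=
  (2 * d : ℝ)⁻¹ ^ n * ∑ σ : Fin n → Fin d × Bool,
    Real.exp (β * ∑ i : Fin n, env ((i : ℕ) + 1, walkPos σ ((i : ℕ) + 1)) x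
      - n * logMGF P env β)

/-- The environment `ω = env` is a family of i.i.d. random variables, indexed by space-time
`ℕ × ℤ^d`, having all exponential moments: `E[exp (b |ω(1,0)|)] < ∞` for all `b ≥ 0`. -/
structure IsIIDEnv {d : ℕ} (P : Measure Ω) (env : ℕ × (Fin d → ℤ) → Ω → ℝ) : Prop where
  meas : ∀ p, Measurable (env p)
  indep : iIndepFun env P
  ident : ∀ p, IdentDistrib (env p) (env (1, 0)) P P
  expMom : ∀ b : ℝ, 0 ≤ b → Integrable (fun x => Real.exp (b * |env (1, 0) x|)) P

/-- The filtration `F_n = σ(ω(i,x) : i ≤ n, x ∈ ℤ^d)` generated by the environment. -/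
def envFiltration {d : ℕ} (env : ℕ × (Fin d → ℤ) → Ω → ℝ)
    (hmeas : ∀ p, Measurable (env p)) :
    Filtration ℕ (inferInstance : MeasurableSpace Ω) where
  seq n := ⨆ p ∈ {p : ℕ × (Fin d → ℤ) | p.1 ≤ n}, MeasurableSpace.comap (env p) inferInstance
  mono' := by
    intro i j hij
    exact iSup₂_le fun p hp => le_iSup₂_of_le p (le_trans hp hij) le_rfl
  le' n := iSup₂_le fun p _ => (hmeas p).comap_le


/-- The polymer measure of the event `{S_n = y}`, multiplied by `W_n`:
`W_n · μ_{n,β}(S_n = y)`. -/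
def polymerMass {d : ℕ} (P : Measure Ω) (env : ℕ × (Fin d → ℤ) → Ω → ℝ) (β : ℝ) (n : ℕ)
    (y : Fin d → ℤ) (x : Ω) : ℝ :=
  (2 * d : ℝ)⁻¹ ^ n * ∑ σ : Fin n → Fin d × Bool,
    if walkPos σ n = y then
      Real.exp (β * ∑ i : Fin n, env ((i : ℕ) + 1, walkPos σ ((i : ℕ) + 1)) x
        - n * logMGF P env β)
    else 0

/-- The space-time shift `θ_{n,y}` of the environment: `(θ_{n,y} ω)(·,·) = ω(n + ·, y + ·)`. -/
def shiftEnv {d : ℕ} (n : ℕ) (y : Fin d → ℤ) (env : ℕ × (Fin d → ℤ) → Ω → ℝ) :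
    ℕ × (Fin d → ℤ) → Ω → ℝ :=
  fun p => env (n + p.1, y + p.2)

/-- The hitting time `inf {n ≥ 0 : t < g n x}` of `(t, ∞)`, with value `⊤ = ∞` if the
process never exceeds `t`. -/
def hitAbove (g : ℕ → Ω → ℝ) (t : ℝ) (x : Ω) : ℕ∞ :=
  sInf {m : ℕ∞ | ∃ k : ℕ, m = (k : ℕ∞) ∧ t < g k x}

/-- The hitting time `inf {n ≥ 0 : g n x ≤ s}` of `(-∞, s]`, with value `⊤ = ∞` if the
process never goes below `s`. -/
def hitBelow (g : ℕ → Ω → ℝ) (s : ℝ) (x : Ω) : ℕ∞ :=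
  sInf {m : ℕ∞ | ∃ k : ℕ, m = (k : ℕ∞) ∧ g k x ≤ s}

section Aux

variable {d : ℕ} {P : Measure Ω} [IsProbabilityMeasure P]
  {env : ℕ × (Fin d → ℤ) → Ω → ℝ} {β : ℝ}


lemma abs_step_le (d : ℕ) (e : Fin d × Bool) (c : Fin d) : |step d e c| ≤ 1 := by
  unfold step
  rcases eq_or_ne c e.1 with h | h
  · subst h; rw [Pi.single_eq_same]; split <;> simp
  · rw [Pi.single_eq_of_ne h]; simp

lemma abs_walkPos_le {d n : ℕ} (σ : Fin n → Fin d × Bool) (k : ℕ) (c : Fin d) :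
    |walkPos σ k c| ≤ n := by
  unfold walkPos
  rw [Finset.sum_apply]
  calc |∑ j : Fin n, (if (j : ℕ) < k then step d (σ j) else 0) c|
      ≤ ∑ j : Fin n, |(if (j : ℕ) < k then step d (σ j) else 0) c| :=
        Finset.abs_sum_le_sum_abs _ _
    _ ≤ ∑ _j : Fin n, (1 : ℤ) := by
        refine Finset.sum_le_sum fun j _ => ?_
        split
        · exact abs_step_le d (σ j) c
        · simp
    _ = n := by simp

lemma measurable_W' {d : ℕ} (P : Measure Ω) {env' : ℕ × (Fin d → ℤ) → Ω → ℝ}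
    (hm : ∀ p, Measurable (env' p)) (β : ℝ) (m : ℕ) : Measurable (W P env' β m) := by
  unfold W
  refine (Finset.measurable_sum _ fun σ _ => ?_).const_mul _
  exact (((Finset.measurable_sum _ fun i _ => hm _).const_mul β).sub measurable_const).exp

lemma W_nonneg' {d : ℕ} (P : Measure Ω) (env' : ℕ × (Fin d → ℤ) → Ω → ℝ) (β : ℝ) (m : ℕ)
    (x : Ω) : 0 ≤ W P env' β m x := by
  unfold W
  refine mul_nonneg (by positivity) (Finset.sum_nonneg fun σ _ => (Real.exp_pos _).le)

lemma logMGF_shift (henv : IsIIDEnv P env) (j : ℕ) (y : Fin d → ℤ) :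
    logMGF P (shiftEnv j y env) β = logMGF P env β := by
  unfold logMGF shiftEnv
  congr 1
  have h : IdentDistrib (env (j + 1, y + 0)) (env (1, 0)) P P := henv.ident _
  exact (h.comp (Real.measurable_exp.comp (measurable_const.mul measurable_id))).integral_eq

lemma integrable_exp_beta (henv : IsIIDEnv P env) (hβ : 0 < β) (q : ℕ × (Fin d → ℤ)) :
    Integrable (fun x => Real.exp (β * env q x)) P := by
  have h0 : Integrable (fun x => Real.exp (β * env (1, 0) x)) P := by
    refine (henv.expMom β hβ.le).mono' ?_ ?_
    · exact (((henv.meas (1, 0)).const_mul β).exp).aestronglyMeasurable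
    · filter_upwards with x
      rw [Real.norm_eq_abs, abs_of_pos (Real.exp_pos _)]
      exact Real.exp_le_exp.2 (mul_le_mul_of_nonneg_left (le_abs_self _) hβ.le)
  exact ((henv.ident q).comp
    (Real.measurable_exp.comp (measurable_const.mul measurable_id))).integrable_iff.2 h0

lemma mgf_env_eq (henv : IsIIDEnv P env) (hβ : 0 < β) (q : ℕ × (Fin d → ℤ)) :
    mgf (env q) P β = Real.exp (logMGF P env β) := by
  have h : mgf (env q) P β = mgf (env (1, 0)) P β :=
    ((henv.ident q).comp
      (Real.measurable_exp.comp (measurable_const.mul measurable_id))).integral_eq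
  rw [h, logMGF, Real.exp_log]
  · rfl
  · exact mgf_pos (integrable_exp_beta henv hβ (1, 0))


/-- The space-time index of the `i`-th environment variable visited by the path `σ`. -/
def pidx {d m : ℕ} (σ : Fin m → Fin d × Bool) (i : Fin m) : ℕ × (Fin d → ℤ) :=
  ((i : ℕ) + 1, walkPos σ ((i : ℕ) + 1))

lemma pidx_inj {m : ℕ} (σ : Fin m → Fin d × Bool) : Function.Injective (pidx σ) := by
  intro i i' h
  have := congrArg Prod.fst h
  simpa [pidx, Fin.val_inj] using this

lemma pathTerm (henv : IsIIDEnv P env) (hβ : 0 < β) {m : ℕ} (σ : Fin m → Fin d × Bool) :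
    Integrable (fun x => Real.exp
      (β * ∑ i : Fin m, env (pidx σ i) x - m * logMGF P env β)) P ∧
    ∫ x, Real.exp (β * ∑ i : Fin m, env (pidx σ i) x - m * logMGF P env β) ∂P = 1 := by
  classical
  have hsum : ∀ x : Ω, ∑ i : Fin m, env (pidx σ i) x
      = (∑ q ∈ Finset.image (pidx σ) Finset.univ, env q) x := by
    intro x
    rw [Finset.sum_apply, Finset.sum_image (fun i _ i' _ h => pidx_inj σ h)]
  have hre : (fun x => Real.exp (β * ∑ i : Fin m, env (pidx σ i) x - m * logMGF P env β))
      = fun x => Real.exp (β * (∑ q ∈ Finset.image (pidx σ) Finset.univ, env q) x)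
          * Real.exp (-(m * logMGF P env β)) := by
    funext x
    rw [sub_eq_add_neg, Real.exp_add, hsum]
  have hint : Integrable
      (fun x => Real.exp (β * (∑ q ∈ Finset.image (pidx σ) Finset.univ, env q) x)) P :=
    henv.indep.integrable_exp_mul_sum henv.meas (fun q _ => integrable_exp_beta henv hβ q)
  constructor
  · rw [hre]; exact hint.mul_const _
  · rw [hre, integral_mul_const]
    have hmgf : ∫ x, Real.exp (β * (∑ q ∈ Finset.image (pidx σ) Finset.univ, env q) x) ∂P
        = mgf (∑ q ∈ Finset.image (pidx σ) Finset.univ, env q) P β := rfl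
    rw [hmgf, henv.indep.mgf_sum henv.meas]
    have hcard : (Finset.image (pidx σ) Finset.univ).card = m := by
      rw [Finset.card_image_of_injective _ (pidx_inj σ), Finset.card_univ, Fintype.card_fin]
    rw [Finset.prod_congr rfl (fun q _ => mgf_env_eq henv hβ q), Finset.prod_const, hcard,
      ← Real.exp_nat_mul, ← Real.exp_add]
    ring_nf
    exact Real.exp_zero

lemma integrable_W (henv : IsIIDEnv P env) (hβ : 0 < β) (m : ℕ) :
    Integrable (W P env β m) P := by
  unfold W
  refine Integrable.const_mul (integrable_finset_sum _ fun σ _ => ?_) _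
  exact (pathTerm henv hβ σ).1

lemma integral_W (henv : IsIIDEnv P env) (hβ : 0 < β) (hd : 0 < d) (m : ℕ) :
    ∫ x, W P env β m x ∂P = 1 := by
  have hW : W P env β m = fun x => (2 * d : ℝ)⁻¹ ^ m *
      ∑ σ : Fin m → Fin d × Bool,
        Real.exp (β * ∑ i : Fin m, env (pidx σ i) x - m * logMGF P env β) := rfl
  rw [hW, integral_const_mul, integral_finset_sum _ fun σ _ => (pathTerm henv hβ σ).1,
    Finset.sum_congr rfl fun σ _ => (pathTerm henv hβ σ).2]
  have hcard : ∑ _σ : Fin m → Fin d × Bool, (1 : ℝ) = (2 * d : ℝ) ^ m := by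
    simp [Fintype.card_fun]
    ring
  rw [hcard, inv_pow, inv_mul_cancel₀]
  positivity

lemma map_restrict_pi {ι : Type*} [Fintype ι] (henv : IsIIDEnv P env)
    {g : ι → ℕ × (Fin d → ℤ)} (hg : Function.Injective g) :
    P.map (fun x (i : ι) => env (g i) x) = Measure.pi (fun i => P.map (env (g i))) := by
  classical
  refine (Measure.pi_eq fun s hs => ?_).symm
  have hF : Measurable (fun x (i : ι) => env (g i) x) :=
    measurable_pi_lambda _ fun i => henv.meas _
  rw [Measure.map_apply hF (MeasurableSet.univ_pi hs)]
  have hpre : (fun x (i : ι) => env (g i) x) ⁻¹' (Set.univ.pi s) = ⋂ i, env (g i) ⁻¹' s i := by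
    ext x; simp [Set.mem_pi]
  rw [hpre]
  have hsets_g : ∀ i, (if h : ∃ i', g i' = g i then s h.choose else Set.univ) = s i := by
    intro i
    have hex : ∃ i', g i' = g i := ⟨i, rfl⟩
    rw [dif_pos hex]
    exact congrArg s (hg hex.choose_spec)
  have key := henv.indep.measure_inter_preimage_eq_mul
    (S := Finset.image g Finset.univ)
    (sets := fun q => if h : ∃ i, g i = q then s h.choose else Set.univ)
    (fun q hq => by
      obtain ⟨i, _, rfl⟩ := Finset.mem_image.1 hq
      show MeasurableSet (if h : ∃ i', g i' = g i then s h.choose else Set.univ)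
      rw [hsets_g]; exact hs i)
  have hiInter : (⋂ q ∈ Finset.image g Finset.univ,
        env q ⁻¹' (if h : ∃ i, g i = q then s h.choose else Set.univ))
      = ⋂ i, env (g i) ⁻¹' s i := by
    ext x
    simp only [Set.mem_iInter, Finset.mem_image, Finset.mem_univ, true_and]
    constructor
    · intro h i
      have := h (g i) ⟨i, rfl⟩
      rwa [hsets_g] at this
    · rintro h q ⟨i, rfl⟩
      rw [hsets_g]; exact h i
  have hprod : (∏ q ∈ Finset.image g Finset.univ,
        P (env q ⁻¹' (if h : ∃ i, g i = q then s h.choose else Set.univ)))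
      = ∏ i, P (env (g i) ⁻¹' s i) := by
    rw [Finset.prod_image (fun i _ i' _ h => hg h)]
    exact Finset.prod_congr rfl fun i _ => by rw [hsets_g]
  rw [hiInter, hprod] at key
  rw [key]
  exact Finset.prod_congr rfl fun i _ => (Measure.map_apply (henv.meas _) (hs i)).symm

lemma identDistrib_restrict {ι : Type*} [Fintype ι] (henv : IsIIDEnv P env)
    {g g' : ι → ℕ × (Fin d → ℤ)} (hg : Function.Injective g) (hg' : Function.Injective g') :
    IdentDistrib (fun x (i : ι) => env (g i) x) (fun x (i : ι) => env (g' i) x) P P := by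
  refine ⟨(measurable_pi_lambda _ fun i => henv.meas _).aemeasurable,
    (measurable_pi_lambda _ fun i => henv.meas _).aemeasurable, ?_⟩
  rw [map_restrict_pi henv hg, map_restrict_pi henv hg']
  have : (fun i => P.map (env (g i))) = fun i => P.map (env (g' i)) := by
    funext i
    exact ((henv.ident (g i)).trans (henv.ident (g' i)).symm).map_eq
  rw [this]

/-- The joint index map for all environment variables entering `W_m`. -/
def pathPairIdx (d m : ℕ) : ((Fin m → Fin d × Bool) × Fin m) → ℕ × (Fin d → ℤ) :=
  fun p => pidx p.1 p.2

/-- The space-time shift on indices. -/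
def pShift {d : ℕ} (j : ℕ) (y : Fin d → ℤ) (q : ℕ × (Fin d → ℤ)) : ℕ × (Fin d → ℤ) :=
  (j + q.1, y + q.2)

lemma pShift_inj {j : ℕ} {y : Fin d → ℤ} : Function.Injective (pShift (d := d) j y) := by
  intro a b hab
  simp only [pShift, Prod.mk.injEq] at hab
  exact Prod.ext (by omega) (add_left_cancel hab.2)

/-- Reading off `W_m` from the restricted environment. -/
def Gfun (d m : ℕ) (lam β : ℝ) : (Set.range (pathPairIdx d m) → ℝ) → ℝ :=
  fun u => (2 * d : ℝ)⁻¹ ^ m * ∑ σ : Fin m → Fin d × Bool,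
    Real.exp (β * ∑ i : Fin m, u ⟨pathPairIdx d m (σ, i), Set.mem_range_self _⟩ - m * lam)

lemma measurable_Gfun (d m : ℕ) (lam β : ℝ) : Measurable (Gfun d m lam β) := by
  refine (Finset.measurable_sum _ fun σ _ => ?_).const_mul _
  refine Real.measurable_exp.comp (Measurable.sub (Measurable.const_mul ?_ β) measurable_const)
  exact Finset.measurable_sum Finset.univ
    (fun i _ => measurable_pi_apply (⟨pathPairIdx d m (σ, i), Set.mem_range_self _⟩ : Set.range (pathPairIdx d m)))

lemma identDistrib_W_shift (henv : IsIIDEnv P env) (hβ : 0 < β) (j m : ℕ) (y : Fin d → ℤ) :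
    IdentDistrib (W P (shiftEnv j y env) β m) (W P env β m) P P := by
  classical
  haveI : Fintype (Set.range (pathPairIdx d m)) := Set.fintypeRange _
  have h1 : W P env β m
      = Gfun d m (logMGF P env β) β ∘
        (fun x (k : Set.range (pathPairIdx d m)) => env k.1 x) := rfl
  have h2 : W P (shiftEnv j y env) β m
      = Gfun d m (logMGF P env β) β ∘
        (fun x (k : Set.range (pathPairIdx d m)) => env (pShift j y k.1) x) := by
    rw [show W P (shiftEnv j y env) β m
      = Gfun d m (logMGF P (shiftEnv j y env) β) β ∘
        (fun x (k : Set.range (pathPairIdx d m)) => env (pShift j y k.1) x) from rfl,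
      logMGF_shift henv j y]
  rw [h1, h2]
  exact (identDistrib_restrict henv (pShift_inj.comp Subtype.val_injective)
    Subtype.val_injective).comp (measurable_Gfun d m (logMGF P env β) β)


/-- Truncation above level `K`. -/
def phi (K u : ℝ) : ℝ := if K < u then u else 0

lemma measurable_phi (K : ℝ) : Measurable (phi K) :=
  Measurable.ite (measurableSet_lt measurable_const measurable_id) measurable_id measurable_const

lemma phi_nonneg {K : ℝ} (hK : 0 ≤ K) (u : ℝ) : 0 ≤ phi K u := by
  unfold phi; split
  · linarith
  · exact le_rfl

lemma le_phi_add {K : ℝ} (hK : 0 ≤ K) (u : ℝ) : u ≤ phi K u + K := by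
  unfold phi; split
  · linarith
  · rw [zero_add]; linarith

lemma phi_le_self {K : ℝ} (hK : 0 ≤ K) {u : ℝ} (hu : 0 ≤ u) : phi K u ≤ u := by
  unfold phi; split
  · exact le_rfl
  · exact hu

/-- From uniform integrability: a uniform truncated-moment bound. -/
lemma exists_K (henv : IsIIDEnv P env) (hβ : 0 < β) (hd : 0 < d)
    (hUI : UniformIntegrable (W P env β) 1 P) :
    ∃ K₀ : ℝ, 1 ≤ K₀ ∧ ∀ m : ℕ, ∫ x, phi K₀ (W P env β m x) ∂P ≤ 1/8 := by
  obtain ⟨δ, hδpos, hδ⟩ := hUI.2.1 (by norm_num : (0:ℝ) < 1/8)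
  refine ⟨max 1 (2/δ), le_max_left _ _, fun m => ?_⟩
  set K₀ := max 1 (2/δ) with hK₀
  have hK₀pos : 0 < K₀ := lt_of_lt_of_le one_pos (le_max_left _ _)
  set s : Set Ω := {x | K₀ < W P env β m x} with hs
  have hsm : MeasurableSet s := measurableSet_lt measurable_const (measurable_W' P henv.meas β m)
  -- Markov bound
  have hmark := mul_meas_ge_le_integral_of_nonneg
    (Filter.Eventually.of_forall (W_nonneg' P env β m)) (integrable_W henv hβ m) K₀
  rw [integral_W henv hβ hd m] at hmark
  have hsub : s ⊆ {x | K₀ ≤ W P env β m x} := fun x hx => by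
    simp only [hs, Set.mem_setOf_eq] at hx ⊢; exact le_of_lt hx
  have htr : (P s).toReal ≤ δ := by
    have h1 : (P s).toReal ≤ (P {x | K₀ ≤ W P env β m x}).toReal := by
      apply ENNReal.toReal_mono (measure_ne_top _ _) (measure_mono hsub)
    have h2 : (P {x | K₀ ≤ W P env β m x}).toReal ≤ 1/K₀ := by
      rw [le_div_iff₀ hK₀pos]; rw [measureReal_def] at hmark; linarith [hmark]
    have h3 : 1/K₀ ≤ δ/2 := by
      rw [div_le_div_iff₀ hK₀pos (by norm_num)]
      have : 2/δ ≤ K₀ := le_max_right _ _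
      calc 1*2 = 2 := by ring
        _ = δ * (2/δ) := by field_simp
        _ ≤ δ * K₀ := by nlinarith
      
    linarith
  have hPs : P s ≤ ENNReal.ofReal δ := by
    rw [← ENNReal.ofReal_toReal (measure_ne_top P s)]
    exact ENNReal.ofReal_le_ofReal htr
  have hsn := hδ m s hsm hPs
  -- convert eLpNorm bound to integral bound
  have hieq : (fun x => phi K₀ (W P env β m x)) = s.indicator (W P env β m) := by
    funext x
    rw [Set.indicator_apply]
    simp only [phi, hs, Set.mem_setOf_eq]
  rw [hieq]
  have hnn : 0 ≤ᵐ[P] s.indicator (W P env β m) :=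
    Filter.Eventually.of_forall fun x => Set.indicator_nonneg (fun y _ => W_nonneg' P env β m y) x
  have hint : Integrable (s.indicator (W P env β m)) P :=
    (integrable_W henv hβ m).indicator hsm
  rw [integral_eq_lintegral_of_nonneg_ae hnn hint.aestronglyMeasurable]
  refine ENNReal.toReal_le_of_le_ofReal (by norm_num) ?_
  have : ∫⁻ x, ENNReal.ofReal (s.indicator (W P env β m) x) ∂P
      = eLpNorm (s.indicator (W P env β m)) 1 P := by
    rw [eLpNorm_one_eq_lintegral_enorm]
    refine lintegral_congr fun x => ?_
    rw [← Real.enorm_eq_ofReal (Set.indicator_nonneg (fun y _ => W_nonneg' P env β m y) x)]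
  rw [this]
  exact hsn

/-- The key uniform estimate: if weights sum above `t > 1`, the weighted average of
shifted partition functions exceeds `t/2` with probability at least `1/(32 K₀)`. -/
lemma key_estimate (henv : IsIIDEnv P env) (hβ : 0 < β) (hd : 0 < d)
    {K₀ : ℝ} (hK₁ : 1 ≤ K₀)
    (hK : ∀ m : ℕ, ∫ x, phi K₀ (W P env β m x) ∂P ≤ 1/8)
    {j m : ℕ} {t : ℝ} (ht : 1 < t) (c : (Fin j → Fin d × Bool) → ℝ)
    (hc : ∀ σ, 0 ≤ c σ) (hsum : t < ∑ σ, c σ) :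
    ENNReal.ofReal (1 / (32 * K₀)) ≤
      P {x | t * (1/2) < ∑ σ : Fin j → Fin d × Bool,
        c σ * W P (shiftEnv j (walkPos σ j) env) β m x} := by
  classical
  have hK₀pos : (0:ℝ) < K₀ := lt_of_lt_of_le one_pos hK₁
  set s : ℝ := ∑ σ : Fin j → Fin d × Bool, c σ with hsdef
  have hspos : 0 < s := lt_trans (lt_trans one_pos ht) hsum
  set X : (Fin j → Fin d × Bool) → Ω → ℝ :=
    fun σ => W P (shiftEnv j (walkPos σ j) env) β m with hX
  have hXid : ∀ σ, IdentDistrib (X σ) (W P env β m) P P :=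
    fun σ => identDistrib_W_shift henv hβ j m _
  have hXm : ∀ σ, Measurable (X σ) :=
    fun σ => measurable_W' P (fun p => henv.meas _) β m
  have hXnn : ∀ σ x, 0 ≤ X σ x := fun σ x => W_nonneg' P _ β m x
  have hXint : ∀ σ, Integrable (X σ) P :=
    fun σ => (hXid σ).integrable_iff.2 (integrable_W henv hβ m)
  have hXmean : ∀ σ, ∫ x, X σ x ∂P = 1 :=
    fun σ => (hXid σ).integral_eq.trans (integral_W henv hβ hd m)
  have hXphi : ∀ σ, ∫ x, phi K₀ (X σ x) ∂P ≤ 1/8 := fun σ => by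
    have h := ((hXid σ).comp (measurable_phi K₀)).integral_eq
    exact le_trans (le_of_eq h) (hK m)
  have hphiint : ∀ σ, Integrable (fun x => phi K₀ (X σ x)) P := fun σ =>
    (hXint σ).mono' ((measurable_phi K₀).comp (hXm σ)).aestronglyMeasurable
      (Filter.Eventually.of_forall fun x => by
        rw [Real.norm_eq_abs, abs_of_nonneg (phi_nonneg (by linarith) _)]
        exact phi_le_self (by linarith) (hXnn σ x))
  set Z : Ω → ℝ := fun x => ∑ σ : Fin j → Fin d × Bool, (c σ / s) * X σ x with hZ
  have hZm : Measurable Z := Finset.measurable_sum _ fun σ _ => (hXm σ).const_mul _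
  have hZnn : ∀ x, 0 ≤ Z x := fun x =>
    Finset.sum_nonneg fun σ _ => mul_nonneg (div_nonneg (hc σ) hspos.le) (hXnn σ x)
  have hZint : Integrable Z P := integrable_finset_sum _ fun σ _ => ((hXint σ).const_mul _)
  have hZmean : ∫ x, Z x ∂P = 1 := by
    rw [hZ]
    rw [integral_finset_sum _ fun σ _ => (hXint σ).const_mul _]
    have : ∀ σ : Fin j → Fin d × Bool, ∫ x, (c σ / s) * X σ x ∂P = c σ / s := by
      intro σ
      rw [integral_const_mul, hXmean σ, mul_one]
    rw [Finset.sum_congr rfl fun σ _ => this σ, ← Finset.sum_div, ← hsdef, div_self hspos.ne']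
  set B : Set Ω := {x | 8*K₀ < Z x} with hB
  have hBm : MeasurableSet B := measurableSet_lt measurable_const hZm
  have hPB : (P B).toReal ≤ 1/(8*K₀) := by
    have hmark := mul_meas_ge_le_integral_of_nonneg
      (Filter.Eventually.of_forall hZnn) hZint (8*K₀)
    rw [hZmean] at hmark
    have h1 : (P B).toReal ≤ (P {x | 8*K₀ ≤ Z x}).toReal :=
      ENNReal.toReal_mono (measure_ne_top _ _) (measure_mono fun x hx => by
        simp only [hB, Set.mem_setOf_eq] at hx ⊢; exact le_of_lt hx)
    rw [le_div_iff₀ (by linarith)]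
    calc (P B).toReal * (8*K₀) ≤ (P {x | 8*K₀ ≤ Z x}).toReal * (8*K₀) := by nlinarith
      _ = (8*K₀) * (P {x | 8*K₀ ≤ Z x}).toReal := by ring
      _ ≤ 1 := hmark
  -- bound the integral of Z over B
  have hXB : ∀ σ, ∫ x in B, X σ x ∂P ≤ 1/4 := by
    intro σ
    have h1 : ∫ x in B, X σ x ∂P ≤ ∫ x in B, (phi K₀ (X σ x) + K₀) ∂P := by
      refine setIntegral_mono_on (hXint σ).integrableOn
        (((hphiint σ).add (integrable_const _)).integrableOn) hBm ?_
      intro x _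
      exact le_phi_add (by linarith) _
    have h2 : ∫ x in B, (phi K₀ (X σ x) + K₀) ∂P
        = (∫ x in B, phi K₀ (X σ x) ∂P) + K₀ * (P B).toReal := by
      rw [integral_add ((hphiint σ).integrableOn) (integrable_const _).integrableOn,
        setIntegral_const, smul_eq_mul]
      rw [measureReal_def]; ring
    have h3 : ∫ x in B, phi K₀ (X σ x) ∂P ≤ ∫ x, phi K₀ (X σ x) ∂P :=
      setIntegral_le_integral (hphiint σ)
        (Filter.Eventually.of_forall fun x => phi_nonneg (by linarith) _)
    have h4 : K₀ * (P B).toReal ≤ 1/8 := by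
      calc K₀ * (P B).toReal ≤ K₀ * (1/(8*K₀)) := by nlinarith [hPB]
        _ = 1/8 := by field_simp
    calc ∫ x in B, X σ x ∂P ≤ (∫ x in B, phi K₀ (X σ x) ∂P) + K₀ * (P B).toReal := by
          rw [← h2]; exact h1
      _ ≤ 1/8 + 1/8 := add_le_add (le_trans h3 (hXphi σ)) h4
      _ = 1/4 := by norm_num
  have hZB : ∫ x in B, Z x ∂P ≤ 1/4 := by
    have : ∫ x in B, Z x ∂P = ∑ σ : Fin j → Fin d × Bool, (c σ / s) * ∫ x in B, X σ x ∂P := by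
      rw [hZ]
      rw [integral_finset_sum _ fun σ _ => ((hXint σ).const_mul _).integrableOn]
      exact Finset.sum_congr rfl fun σ _ => integral_const_mul _ _
    rw [this]
    calc ∑ σ : Fin j → Fin d × Bool, (c σ / s) * ∫ x in B, X σ x ∂P
        ≤ ∑ σ : Fin j → Fin d × Bool, (c σ / s) * (1/4) := by
          refine Finset.sum_le_sum fun σ _ => ?_
          exact mul_le_mul_of_nonneg_left (hXB σ) (div_nonneg (hc σ) hspos.le)
      _ = (1/4) * ∑ σ : Fin j → Fin d × Bool, (c σ / s) := by rw [← Finset.sum_mul]; ring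
      _ = 1/4 := by rw [← Finset.sum_div, ← hsdef, div_self hspos.ne', mul_one]
  have hZBc : 3/4 ≤ ∫ x in Bᶜ, Z x ∂P := by
    have := integral_add_compl hBm hZint
    have heq : ∫ x in B, Z x ∂P + ∫ x in Bᶜ, Z x ∂P = 1 := by rw [this, hZmean]
    linarith
  set D : Set Ω := {x | 1/2 < Z x} with hD
  have hDm : MeasurableSet D := measurableSet_lt measurable_const hZm
  have hbound : ∫ x in Bᶜ, Z x ∂P ≤ 1/2 + 8*K₀ * (P D).toReal := by
    have hf : Integrable (fun x => 1/2 + (8*K₀) * D.indicator (fun _ => (1:ℝ)) x) P := by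
      refine (integrable_const _).add (((integrable_const (1:ℝ)).indicator hDm).const_mul _)
    have h1 : ∫ x in Bᶜ, Z x ∂P
        ≤ ∫ x in Bᶜ, (1/2 + (8*K₀) * D.indicator (fun _ => (1:ℝ)) x) ∂P := by
      refine setIntegral_mono_on hZint.integrableOn hf.integrableOn hBm.compl ?_
      intro x hx
      rcases le_or_gt (Z x) (1/2) with h | h
      · have : (0:ℝ) ≤ (8*K₀) * D.indicator (fun _ => (1:ℝ)) x :=
          mul_nonneg (by linarith) (Set.indicator_nonneg (fun _ _ => zero_le_one) x)
        linarith
      · have hxD : x ∈ D := h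
        rw [Set.indicator_of_mem hxD]
        have hxB : Z x ≤ 8*K₀ := not_lt.1 hx
        linarith
    have h2 : ∫ x in Bᶜ, (1/2 + (8*K₀) * D.indicator (fun _ => (1:ℝ)) x) ∂P
        ≤ ∫ x, (1/2 + (8*K₀) * D.indicator (fun _ => (1:ℝ)) x) ∂P := by
      refine setIntegral_le_integral hf (Filter.Eventually.of_forall fun x => ?_)
      have h : (0:ℝ) ≤ (8*K₀) * D.indicator (fun _ => (1:ℝ)) x :=
        mul_nonneg (by linarith) (Set.indicator_nonneg (fun _ _ => zero_le_one) x)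
      show (0:ℝ) ≤ 1/2 + (8*K₀) * D.indicator (fun _ => (1:ℝ)) x
      linarith
    have h3 : ∫ x, (1/2 + (8*K₀) * D.indicator (fun _ => (1:ℝ)) x) ∂P
        = 1/2 + 8*K₀ * (P D).toReal := by
      rw [integral_add (integrable_const _) (((integrable_const (1:ℝ)).indicator hDm).const_mul _),
        integral_const, integral_const_mul, integral_indicator hDm, setIntegral_const]
      simp [measure_univ, measureReal_def]
      all_goals ring
    linarith
  have hPD : 1/(32*K₀) ≤ (P D).toReal := by
    have : 3/4 ≤ 1/2 + 8*K₀ * (P D).toReal := le_trans hZBc hbound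
    rw [div_le_iff₀ (by linarith)]
    nlinarith
  have hsubset : D ⊆ {x | t * (1/2) < ∑ σ : Fin j → Fin d × Bool, c σ * X σ x} := by
    intro x hx
    have hxD : 1/2 < Z x := hx
    have hZx : ∑ σ : Fin j → Fin d × Bool, c σ * X σ x = s * Z x := by
      rw [hZ, Finset.mul_sum]
      refine Finset.sum_congr rfl fun σ _ => ?_
      field_simp
    show t * (1/2) < ∑ σ : Fin j → Fin d × Bool, c σ * X σ x
    rw [hZx]
    calc t * (1/2) < s * (1/2) := by nlinarith
      _ ≤ s * Z x := by nlinarith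
  calc ENNReal.ofReal (1/(32*K₀)) ≤ P D := by
        refine ENNReal.ofReal_le_of_le_toReal hPD
    _ ≤ P {x | t * (1/2) < ∑ σ : Fin j → Fin d × Bool,
          c σ * W P (shiftEnv j (walkPos σ j) env) β m x} := measure_mono hsubset


/-- Concatenation of two step sequences. -/
def glue {d j m : ℕ} (σ1 : Fin j → Fin d × Bool) (σ2 : Fin m → Fin d × Bool) :
    Fin (j + m) → Fin d × Bool :=
  fun a => Sum.elim σ1 σ2 (finSumFinEquiv.symm a)

/-- Pairs of step sequences are equivalent to concatenated step sequences. -/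
def appEquiv (d j m : ℕ) :
    ((Fin j → Fin d × Bool) × (Fin m → Fin d × Bool)) ≃ (Fin (j + m) → Fin d × Bool) :=
  (Equiv.sumArrowEquivProdArrow _ _ _).symm.trans
    (Equiv.arrowCongr finSumFinEquiv (Equiv.refl _))

lemma appEquiv_apply {j m : ℕ} (σ1 : Fin j → Fin d × Bool) (σ2 : Fin m → Fin d × Bool) :
    appEquiv d j m (σ1, σ2) = glue σ1 σ2 := rfl

lemma glue_castAdd {j m : ℕ} (σ1 : Fin j → Fin d × Bool) (σ2 : Fin m → Fin d × Bool)
    (i : Fin j) : glue σ1 σ2 (Fin.castAdd m i) = σ1 i := by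
  simp [glue]

lemma glue_natAdd {j m : ℕ} (σ1 : Fin j → Fin d × Bool) (σ2 : Fin m → Fin d × Bool)
    (i : Fin m) : glue σ1 σ2 (Fin.natAdd j i) = σ2 i := by
  simp [glue]

lemma walkPos_glue_le {j m : ℕ} (σ1 : Fin j → Fin d × Bool) (σ2 : Fin m → Fin d × Bool)
    {k : ℕ} (hk : k ≤ j) : walkPos (glue σ1 σ2) k = walkPos σ1 k := by
  unfold walkPos
  rw [Fin.sum_univ_add]
  have h2 : (∑ i : Fin m, if ((Fin.natAdd j i : Fin (j + m)) : ℕ) < k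
      then step d (glue σ1 σ2 (Fin.natAdd j i)) else 0) = 0 := by
    refine Finset.sum_eq_zero fun i _ => ?_
    rw [if_neg]
    simp only [Fin.coe_natAdd]
    omega
  rw [h2, add_zero]
  refine Finset.sum_congr rfl fun i _ => ?_
  rw [glue_castAdd]
  simp only [Fin.coe_castAdd]

lemma walkPos_glue_add {j m : ℕ} (σ1 : Fin j → Fin d × Bool) (σ2 : Fin m → Fin d × Bool)
    (l : ℕ) : walkPos (glue σ1 σ2) (j + l) = walkPos σ1 j + walkPos σ2 l := by
  unfold walkPos
  rw [Fin.sum_univ_add]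
  congr 1
  · refine Finset.sum_congr rfl fun i _ => ?_
    rw [glue_castAdd]
    rw [if_pos (by simp only [Fin.coe_castAdd]; omega), if_pos i.isLt]
  · refine Finset.sum_congr rfl fun i _ => ?_
    rw [glue_natAdd]
    refine if_congr ?_ rfl rfl
    simp only [Fin.coe_natAdd]
    omega

lemma W_decomp (henv : IsIIDEnv P env) (j m : ℕ) (x : Ω) :
    W P env β (j + m) x = ∑ σ1 : Fin j → Fin d × Bool,
      ((2 * d : ℝ)⁻¹ ^ j * Real.exp (β * ∑ i : Fin j,
          env ((i : ℕ) + 1, walkPos σ1 ((i : ℕ) + 1)) x - j * logMGF P env β))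
        * W P (shiftEnv j (walkPos σ1 j) env) β m x := by
  classical
  set F : (Fin (j + m) → Fin d × Bool) → ℝ := fun σ =>
    Real.exp (β * ∑ i : Fin (j + m), env ((i : ℕ) + 1, walkPos σ ((i : ℕ) + 1)) x
      - (j + m : ℕ) * logMGF P env β) with hF
  set E1 : (Fin j → Fin d × Bool) → ℝ := fun σ1 =>
    Real.exp (β * ∑ i : Fin j, env ((i : ℕ) + 1, walkPos σ1 ((i : ℕ) + 1)) x
      - j * logMGF P env β) with hE1
  set E2 : (Fin j → Fin d × Bool) → (Fin m → Fin d × Bool) → ℝ := fun σ1 σ2 =>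
    Real.exp (β * ∑ i : Fin m,
      shiftEnv j (walkPos σ1 j) env ((i : ℕ) + 1, walkPos σ2 ((i : ℕ) + 1)) x
      - m * logMGF P env β) with hE2
  have key : ∀ σ1 σ2, F (appEquiv d j m (σ1, σ2)) = E1 σ1 * E2 σ1 σ2 := by
    intro σ1 σ2
    have hsplit : ∑ i : Fin (j + m),
        env ((i : ℕ) + 1, walkPos (appEquiv d j m (σ1, σ2)) ((i : ℕ) + 1)) x
        = (∑ i : Fin j, env ((i : ℕ) + 1, walkPos σ1 ((i : ℕ) + 1)) x)
          + ∑ i : Fin m,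
            shiftEnv j (walkPos σ1 j) env ((i : ℕ) + 1, walkPos σ2 ((i : ℕ) + 1)) x := by
      rw [appEquiv_apply, Fin.sum_univ_add]
      congr 1
      · refine Finset.sum_congr rfl fun i _ => ?_
        simp only [Fin.coe_castAdd]
        rw [walkPos_glue_le σ1 σ2 (by omega : (i : ℕ) + 1 ≤ j)]
      · refine Finset.sum_congr rfl fun i _ => ?_
        simp only [Fin.coe_natAdd, shiftEnv]
        rw [show j + (i : ℕ) + 1 = j + ((i : ℕ) + 1) from by omega]
        rw [walkPos_glue_add]
    rw [hF, hE1, hE2]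
    simp only
    rw [hsplit, ← Real.exp_add]
    congr 1
    push_cast
    ring
  have hW2 : ∀ σ1 : Fin j → Fin d × Bool,
      W P (shiftEnv j (walkPos σ1 j) env) β m x
      = (2 * d : ℝ)⁻¹ ^ m * ∑ σ2 : Fin m → Fin d × Bool, E2 σ1 σ2 := by
    intro σ1
    have : W P (shiftEnv j (walkPos σ1 j) env) β m x
        = (2 * d : ℝ)⁻¹ ^ m * ∑ σ2 : Fin m → Fin d × Bool,
          Real.exp (β * ∑ i : Fin m,
            shiftEnv j (walkPos σ1 j) env ((i : ℕ) + 1, walkPos σ2 ((i : ℕ) + 1)) x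
            - m * logMGF P (shiftEnv j (walkPos σ1 j) env) β) := rfl
    rw [this, logMGF_shift henv j (walkPos σ1 j), hE2]
  calc W P env β (j + m) x
      = (2 * d : ℝ)⁻¹ ^ (j + m) * ∑ σ : Fin (j + m) → Fin d × Bool, F σ := rfl
    _ = (2 * d : ℝ)⁻¹ ^ (j + m) *
        ∑ p : (Fin j → Fin d × Bool) × (Fin m → Fin d × Bool), F (appEquiv d j m p) := by
        exact congrArg _ (Equiv.sum_comp (appEquiv d j m) F).symm
    _ = (2 * d : ℝ)⁻¹ ^ (j + m) * ∑ σ1 : Fin j → Fin d × Bool,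
        ∑ σ2 : Fin m → Fin d × Bool, F (appEquiv d j m (σ1, σ2)) := by
        rw [Fintype.sum_prod_type]
    _ = ∑ σ1 : Fin j → Fin d × Bool, ((2 * d : ℝ)⁻¹ ^ j * E1 σ1) *
        ((2 * d : ℝ)⁻¹ ^ m * ∑ σ2 : Fin m → Fin d × Bool, E2 σ1 σ2) := by
        rw [Finset.mul_sum]
        refine Finset.sum_congr rfl fun σ1 _ => ?_
        rw [Finset.mul_sum Finset.univ (fun σ2 => E2 σ1 σ2) ((2 * d : ℝ)⁻¹ ^ m),
          Finset.mul_sum Finset.univ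
            (fun σ2 => (2 * d : ℝ)⁻¹ ^ m * E2 σ1 σ2) ((2 * d : ℝ)⁻¹ ^ j * E1 σ1),
          Finset.mul_sum]
        refine Finset.sum_congr rfl fun σ2 _ => ?_
        rw [key σ1 σ2, pow_add]
        ring
    _ = ∑ σ1 : Fin j → Fin d × Bool,
        ((2 * d : ℝ)⁻¹ ^ j * Real.exp (β * ∑ i : Fin j,
            env ((i : ℕ) + 1, walkPos σ1 ((i : ℕ) + 1)) x - j * logMGF P env β))
          * W P (shiftEnv j (walkPos σ1 j) env) β m x := by
        refine Finset.sum_congr rfl fun σ1 _ => ?_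
        rw [hW2 σ1, hE1]


/-! ### Restricted environments and read-off functions -/

/-- Environment restricted to a finite index window (0 outside). -/
def restEnv (S : Finset (ℕ × (Fin d → ℤ))) (env : ℕ × (Fin d → ℤ) → Ω → ℝ) (x : Ω) :
    (ℕ × (Fin d → ℤ)) → ℝ :=
  fun q => if q ∈ S then env q x else 0

/-- Reading off `W_k` from a full environment configuration. -/
def WG (d : ℕ) (lam β : ℝ) (k : ℕ) (G : (ℕ × (Fin d → ℤ)) → ℝ) : ℝ :=
  (2 * d : ℝ)⁻¹ ^ k * ∑ σ : Fin k → Fin d × Bool,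
    Real.exp (β * ∑ i : Fin k, G ((i : ℕ) + 1, walkPos σ ((i : ℕ) + 1)) - k * lam)

/-- Reading off the weight of an initial path from a configuration. -/
def wG (d : ℕ) (lam β : ℝ) (j : ℕ) (σ1 : Fin j → Fin d × Bool)
    (G : (ℕ × (Fin d → ℤ)) → ℝ) : ℝ :=
  (2 * d : ℝ)⁻¹ ^ j * Real.exp (β * ∑ i : Fin j, G ((i : ℕ) + 1, walkPos σ1 ((i : ℕ) + 1))
    - j * lam)

/-- Reading off the shifted partition function from a configuration. -/
def XG (d : ℕ) (lam β : ℝ) (j m : ℕ) (y : Fin d → ℤ) (H : (ℕ × (Fin d → ℤ)) → ℝ) : ℝ :=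
  (2 * d : ℝ)⁻¹ ^ m * ∑ σ2 : Fin m → Fin d × Bool,
    Real.exp (β * ∑ i : Fin m, H (j + ((i : ℕ) + 1), y + walkPos σ2 ((i : ℕ) + 1)) - m * lam)

/-- The time-space window for times `a+1, ..., b` and spatial box `[-r, r]^d`. -/
def window (d a b : ℕ) (r : ℕ) : Finset (ℕ × (Fin d → ℤ)) :=
  (Finset.Icc (a + 1) b) ×ˢ (Fintype.piFinset fun _ : Fin d => Finset.Icc (-(r : ℤ)) r)

lemma measurable_restEnv (S : Finset (ℕ × (Fin d → ℤ))) (henv : IsIIDEnv P env) :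
    Measurable (restEnv S env) := by
  refine measurable_pi_lambda _ fun q => ?_
  by_cases h : q ∈ S
  · simpa [restEnv, h] using henv.meas q
  · simpa [restEnv, h] using measurable_const

lemma measurable_WG (d : ℕ) (lam β : ℝ) (k : ℕ) : Measurable (WG d lam β k) := by
  refine (Finset.measurable_sum _ fun σ _ => ?_).const_mul _
  refine Real.measurable_exp.comp (Measurable.sub (Measurable.const_mul ?_ β) measurable_const)
  exact Finset.measurable_sum Finset.univ fun i _ =>
    measurable_pi_apply ((i : ℕ) + 1, walkPos σ ((i : ℕ) + 1))

lemma measurable_wG (d : ℕ) (lam β : ℝ) (j : ℕ) (σ1 : Fin j → Fin d × Bool) :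
    Measurable (wG d lam β j σ1) := by
  refine Measurable.const_mul ?_ _
  refine Real.measurable_exp.comp (Measurable.sub (Measurable.const_mul ?_ β) measurable_const)
  exact Finset.measurable_sum Finset.univ fun i _ =>
    measurable_pi_apply ((i : ℕ) + 1, walkPos σ1 ((i : ℕ) + 1))

lemma measurable_XG (d : ℕ) (lam β : ℝ) (j m : ℕ) (y : Fin d → ℤ) :
    Measurable (XG d lam β j m y) := by
  refine (Finset.measurable_sum _ fun σ _ => ?_).const_mul _
  refine Real.measurable_exp.comp (Measurable.sub (Measurable.const_mul ?_ β) measurable_const)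
  exact Finset.measurable_sum Finset.univ fun i _ =>
    measurable_pi_apply (j + ((i : ℕ) + 1), y + walkPos σ ((i : ℕ) + 1))

lemma wG_nonneg (d : ℕ) (lam β : ℝ) (j : ℕ) (σ1 : Fin j → Fin d × Bool)
    (G : (ℕ × (Fin d → ℤ)) → ℝ) : 0 ≤ wG d lam β j σ1 G :=
  mul_nonneg (by positivity) (Real.exp_pos _).le

lemma WG_eq_sum_wG (d : ℕ) (lam β : ℝ) (j : ℕ) (G : (ℕ × (Fin d → ℤ)) → ℝ) :
    WG d lam β j G = ∑ σ1 : Fin j → Fin d × Bool, wG d lam β j σ1 G :=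
  Finset.mul_sum _ _ _

lemma mem_window_init {j k : ℕ} (hk : k ≤ j) (σ : Fin k → Fin d × Bool) (i : Fin k) :
    ((i : ℕ) + 1, walkPos σ ((i : ℕ) + 1)) ∈ window d 0 j j := by
  rw [window, Finset.mem_product]
  constructor
  · rw [Finset.mem_Icc]; omega
  · rw [Fintype.mem_piFinset]
    intro c
    rw [Finset.mem_Icc, ← abs_le]
    calc |walkPos σ ((i : ℕ) + 1) c| ≤ k := abs_walkPos_le σ _ c
      _ ≤ (j : ℤ) := by exact_mod_cast hk

lemma mem_window_shift {j m : ℕ} (σ1 : Fin j → Fin d × Bool) (σ2 : Fin m → Fin d × Bool)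
    (i : Fin m) : (j + ((i : ℕ) + 1), walkPos σ1 j + walkPos σ2 ((i : ℕ) + 1))
      ∈ window d j (j + m) (j + m) := by
  rw [window, Finset.mem_product]
  constructor
  · rw [Finset.mem_Icc]; omega
  · rw [Fintype.mem_piFinset]
    intro c
    rw [Finset.mem_Icc, ← abs_le]
    calc |(walkPos σ1 j + walkPos σ2 ((i : ℕ) + 1)) c|
        ≤ |walkPos σ1 j c| + |walkPos σ2 ((i : ℕ) + 1) c| := by
          rw [Pi.add_apply]; exact abs_add_le _ _
      _ ≤ (j : ℤ) + m := add_le_add (abs_walkPos_le σ1 _ c) (abs_walkPos_le σ2 _ c)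
      _ = ((j + m : ℕ) : ℤ) := by push_cast; ring

/-- Key pointwise identity: on the window `S`, `WG` reads off `W_k`. -/
lemma WG_restEnv {j k : ℕ} (hk : k ≤ j) (x : Ω) :
    WG d (logMGF P env β) β k (restEnv (window d 0 j j) env x) = W P env β k x := by
  refine congrArg (fun z => (2 * d : ℝ)⁻¹ ^ k * z) (Finset.sum_congr rfl fun σ _ => ?_)
  refine congrArg (fun z => Real.exp (β * z - k * logMGF P env β))
    (Finset.sum_congr rfl fun i _ => ?_)
  show (if ((i : ℕ) + 1, walkPos σ ((i : ℕ) + 1)) ∈ window d 0 j j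
    then env ((i : ℕ) + 1, walkPos σ ((i : ℕ) + 1)) x else 0) = _
  rw [if_pos (mem_window_init hk σ i)]

lemma wG_restEnv {j : ℕ} (σ1 : Fin j → Fin d × Bool) (x : Ω) :
    wG d (logMGF P env β) β j σ1 (restEnv (window d 0 j j) env x)
      = (2 * d : ℝ)⁻¹ ^ j * Real.exp (β * ∑ i : Fin j,
          env ((i : ℕ) + 1, walkPos σ1 ((i : ℕ) + 1)) x - j * logMGF P env β) := by
  refine congrArg (fun z => (2 * d : ℝ)⁻¹ ^ j * Real.exp (β * z - j * logMGF P env β))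
    (Finset.sum_congr rfl fun i _ => ?_)
  show (if ((i : ℕ) + 1, walkPos σ1 ((i : ℕ) + 1)) ∈ window d 0 j j
    then env ((i : ℕ) + 1, walkPos σ1 ((i : ℕ) + 1)) x else 0) = _
  rw [if_pos (mem_window_init le_rfl σ1 i)]

lemma XG_restEnv (henv : IsIIDEnv P env) {j m : ℕ} (σ1 : Fin j → Fin d × Bool) (x : Ω) :
    XG d (logMGF P env β) β j m (walkPos σ1 j) (restEnv (window d j (j + m) (j + m)) env x)
      = W P (shiftEnv j (walkPos σ1 j) env) β m x := by
  have hW : W P (shiftEnv j (walkPos σ1 j) env) β m x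
      = (2 * d : ℝ)⁻¹ ^ m * ∑ σ2 : Fin m → Fin d × Bool,
        Real.exp (β * ∑ i : Fin m,
          env (j + ((i : ℕ) + 1), walkPos σ1 j + walkPos σ2 ((i : ℕ) + 1)) x
          - m * logMGF P env β) := by
    rw [show W P (shiftEnv j (walkPos σ1 j) env) β m x
      = (2 * d : ℝ)⁻¹ ^ m * ∑ σ2 : Fin m → Fin d × Bool,
        Real.exp (β * ∑ i : Fin m,
          env (j + ((i : ℕ) + 1), walkPos σ1 j + walkPos σ2 ((i : ℕ) + 1)) x
          - m * logMGF P (shiftEnv j (walkPos σ1 j) env) β) from rfl,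
      logMGF_shift henv j (walkPos σ1 j)]
  rw [hW]
  refine congrArg (fun z => (2 * d : ℝ)⁻¹ ^ m * z) (Finset.sum_congr rfl fun σ2 _ => ?_)
  refine congrArg (fun z => Real.exp (β * z - m * logMGF P env β))
    (Finset.sum_congr rfl fun i _ => ?_)
  show (if (j + ((i : ℕ) + 1), walkPos σ1 j + walkPos σ2 ((i : ℕ) + 1))
      ∈ window d j (j + m) (j + m)
    then env (j + ((i : ℕ) + 1), walkPos σ1 j + walkPos σ2 ((i : ℕ) + 1)) x else 0) = _
  rw [if_pos (mem_window_shift σ1 σ2 i)]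

lemma indep_restEnv (henv : IsIIDEnv P env) {S T : Finset (ℕ × (Fin d → ℤ))}
    (hST : Disjoint S T) :
    IndepFun (restEnv S env) (restEnv T env) P := by
  classical
  have base := henv.indep.indepFun_finset S T hST henv.meas
  have hcomp : ∀ (U : Finset (ℕ × (Fin d → ℤ))),
      restEnv U env = (fun (v : U → ℝ) (q : ℕ × (Fin d → ℤ)) =>
          if h : q ∈ U then v ⟨q, h⟩ else 0) ∘ (fun a (i : U) => env i a) := by
    intro U
    funext x q
    by_cases h : q ∈ U
    · simp [restEnv, h]
    · simp [restEnv, h]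
  have hmeas : ∀ (U : Finset (ℕ × (Fin d → ℤ))),
      Measurable (fun (v : U → ℝ) (q : ℕ × (Fin d → ℤ)) =>
        if h : q ∈ U then v ⟨q, h⟩ else 0) := by
    intro U
    refine measurable_pi_lambda _ fun q => ?_
    by_cases h : q ∈ U
    · simpa [h] using measurable_pi_apply (⟨q, h⟩ : U)
    · simpa [h] using measurable_const
  rw [hcomp S, hcomp T]
  exact base.comp (hmeas S) (hmeas T)


lemma window_disjoint (d j m : ℕ) : Disjoint (window d 0 j j) (window d j (j + m) (j + m)) := by
  rw [Finset.disjoint_left]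
  intro q hq hq'
  rw [window, Finset.mem_product, Finset.mem_Icc] at hq hq'
  omega

/-- The first-passage decomposition estimate at a fixed exceedance time `j`. -/
lemma per_j (henv : IsIIDEnv P env) (hβ : 0 < β) (hd : 0 < d) {K₀ : ℝ} (hK₁ : 1 ≤ K₀)
    (hK : ∀ m : ℕ, ∫ x, phi K₀ (W P env β m x) ∂P ≤ 1/8)
    {t : ℝ} (ht : 1 < t) (j m : ℕ) :
    ENNReal.ofReal (1/(32*K₀)) * P {x | (∀ k < j, W P env β k x ≤ t) ∧ t < W P env β j x}
      ≤ P ({x | (∀ k < j, W P env β k x ≤ t) ∧ t < W P env β j x}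
          ∩ {x | t * (1/2) < W P env β (j + m) x}) := by
  classical
  set A : Set Ω := {x | (∀ k < j, W P env β k x ≤ t) ∧ t < W P env β j x} with hA
  set U : Ω → (ℕ × (Fin d → ℤ)) → ℝ := restEnv (window d 0 j j) env with hU
  set V : Ω → (ℕ × (Fin d → ℤ)) → ℝ := restEnv (window d j (j + m) (j + m)) env with hV
  have hUm : Measurable U := measurable_restEnv _ henv
  have hVm : Measurable V := measurable_restEnv _ henv
  have hIndep : IndepFun U V P := indep_restEnv henv (window_disjoint d j m)
  haveI : IsProbabilityMeasure (P.map U) := Measure.isProbabilityMeasure_map hUm.aemeasurable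
  haveI : IsProbabilityMeasure (P.map V) := Measure.isProbabilityMeasure_map hVm.aemeasurable
  set A' : Set ((ℕ × (Fin d → ℤ)) → ℝ) :=
    {G | ∀ k < j, WG d (logMGF P env β) β k G ≤ t} ∩ {G | t < WG d (logMGF P env β) β j G} with hA'
  have hA'meas : MeasurableSet A' := by
    refine MeasurableSet.inter ?_ (measurableSet_lt measurable_const (measurable_WG d (logMGF P env β) β j))
    have : {G | ∀ k < j, WG d (logMGF P env β) β k G ≤ t}
        = ⋂ k ∈ Set.Iio j, {G | WG d (logMGF P env β) β k G ≤ t} := by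
      ext G; simp [Set.mem_iInter]
    rw [this]
    exact MeasurableSet.biInter (Set.to_countable _) fun k _ =>
      measurableSet_le (measurable_WG d (logMGF P env β) β k) measurable_const
  set g : (((ℕ × (Fin d → ℤ)) → ℝ) × ((ℕ × (Fin d → ℤ)) → ℝ)) → ℝ :=
    fun p => ∑ σ1 : Fin j → Fin d × Bool,
      wG d (logMGF P env β) β j σ1 p.1 * XG d (logMGF P env β) β j m (walkPos σ1 j) p.2 with hg
  have hgmeas : Measurable g :=
    Finset.measurable_sum _ fun σ1 _ =>
      ((measurable_wG d (logMGF P env β) β j σ1).comp measurable_fst).mul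
        ((measurable_XG d (logMGF P env β) β j m (walkPos σ1 j)).comp measurable_snd)
  set C : Set ((((ℕ × (Fin d → ℤ)) → ℝ)) × (((ℕ × (Fin d → ℤ)) → ℝ))) :=
    (A' ×ˢ Set.univ) ∩ {p | t * (1/2) < g p} with hC
  have hCmeas : MeasurableSet C :=
    (hA'meas.prod MeasurableSet.univ).inter (measurableSet_lt measurable_const hgmeas)
  -- pointwise identities
  have hAiff : ∀ x : Ω, x ∈ A ↔ U x ∈ A' := by
    intro x
    rw [hA, hA']
    simp only [Set.mem_inter_iff, Set.mem_setOf_eq, hU]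
    constructor
    · rintro ⟨h1, h2⟩
      refine ⟨fun k hk => ?_, ?_⟩
      · rw [WG_restEnv (le_of_lt hk) x]; exact h1 k hk
      · rw [WG_restEnv le_rfl x]; exact h2
    · rintro ⟨h1, h2⟩
      refine ⟨fun k hk => ?_, ?_⟩
      · have := h1 k hk
        rwa [WG_restEnv (le_of_lt hk) x] at this
      · rwa [WG_restEnv le_rfl x] at h2
  have hWn : ∀ x : Ω, W P env β (j + m) x = g (U x, V x) := by
    intro x
    rw [W_decomp henv j m x, hg]
    refine Finset.sum_congr rfl fun σ1 _ => ?_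
    rw [hU, hV, wG_restEnv σ1 x, XG_restEnv henv σ1 x]
  have hevent : A ∩ {x | t * (1/2) < W P env β (j + m) x}
      = (fun x => (U x, V x)) ⁻¹' C := by
    ext x
    simp only [Set.mem_inter_iff, Set.mem_preimage, hC, Set.mem_prod, Set.mem_univ, and_true,
      Set.mem_setOf_eq]
    rw [← hAiff x, ← hWn x]
  -- independence and product formula
  have hmap := (indepFun_iff_map_prod_eq_prod_map_map hUm.aemeasurable hVm.aemeasurable).1 hIndep
  have hPC : P (A ∩ {x | t * (1/2) < W P env β (j + m) x})
      = ((P.map U).prod (P.map V)) C := by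
    rw [hevent, ← Measure.map_apply (hUm.prodMk hVm) hCmeas, hmap]
  rw [hPC, Measure.prod_apply hCmeas]
  -- lower bound on sections
  have hlb : ∀ G, A'.indicator (fun _ => ENNReal.ofReal (1/(32*K₀))) G
      ≤ (P.map V) (Prod.mk G ⁻¹' C) := by
    intro G
    by_cases hG : G ∈ A'
    · rw [Set.indicator_of_mem hG]
      have hsec : Prod.mk G ⁻¹' C = {H | t * (1/2) < g (G, H)} := by
        ext H
        simp only [hC, Set.mem_preimage, Set.mem_inter_iff, Set.mem_prod, Set.mem_univ,
          and_true, Set.mem_setOf_eq]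
        exact and_iff_right hG
      rw [hsec]
      have hmeasH : MeasurableSet {H | t * (1/2) < g (G, H)} :=
        measurableSet_lt measurable_const (hgmeas.comp measurable_prodMk_left)
      rw [Measure.map_apply hVm hmeasH]
      have hpre : V ⁻¹' {H | t * (1/2) < g (G, H)}
          = {x | t * (1/2) < ∑ σ1 : Fin j → Fin d × Bool,
              wG d (logMGF P env β) β j σ1 G * W P (shiftEnv j (walkPos σ1 j) env) β m x} := by
        ext x
        simp only [Set.mem_preimage, Set.mem_setOf_eq, hg]
        have : ∑ σ1 : Fin j → Fin d × Bool,
            wG d (logMGF P env β) β j σ1 G * XG d (logMGF P env β) β j m (walkPos σ1 j) (V x)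
            = ∑ σ1 : Fin j → Fin d × Bool,
              wG d (logMGF P env β) β j σ1 G * W P (shiftEnv j (walkPos σ1 j) env) β m x := by
          refine Finset.sum_congr rfl fun σ1 _ => ?_
          rw [hV, XG_restEnv henv σ1 x]
        rw [this]
      rw [hpre]
      exact key_estimate henv hβ hd hK₁ hK ht (fun σ1 => wG d (logMGF P env β) β j σ1 G)
        (fun σ1 => wG_nonneg d (logMGF P env β) β j σ1 G)
        (by rw [← WG_eq_sum_wG]; exact hG.2)
    · rw [Set.indicator_of_notMem hG]
      exact zero_le
  calc ENNReal.ofReal (1/(32*K₀)) * P A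
      = ∫⁻ G, A'.indicator (fun _ => ENNReal.ofReal (1/(32*K₀))) G ∂(P.map U) := by
        rw [lintegral_indicator hA'meas, setLIntegral_const,
          Measure.map_apply hUm hA'meas,
          show U ⁻¹' A' = A from by ext x; exact (hAiff x).symm, mul_comm]
    _ ≤ ∫⁻ G, (P.map V) (Prod.mk G ⁻¹' C) ∂(P.map U) := lintegral_mono hlb



end Aux

variable (P : Measure Ω) [IsProbabilityMeasure P]

/-- If the martingale `(W_n)` is uniformly integrable, then there exist `ε > 0` and `c > 0`
such that for all `t > 1` and all `n`, `ℙ(M_n > t) ≤ c⁻¹ ℙ(W_n > t ε)`, where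
`M_n := max_{0 ≤ j ≤ n} W_j`. -/
theorem running_max_tail_bound
    {d : ℕ} (env : ℕ × (Fin d → ℤ) → Ω → ℝ) (henv : IsIIDEnv P env)
    {β : ℝ} (hβ : 0 < β)
    (hUI : UniformIntegrable (W P env β) 1 P) :
    ∃ ε : ℝ, 0 < ε ∧ ∃ c : ℝ, 0 < c ∧ ∀ t : ℝ, 1 < t → ∀ n : ℕ,
      P {x | t < ⨆ j : Fin (n + 1), W P env β (j : ℕ) x} ≤
        ENNReal.ofReal c⁻¹ * P {x | t * ε < W P env β n x} := by
  rcases Nat.eq_zero_or_pos d with hd0 | hd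
  · subst hd0
    refine ⟨1, one_pos, 1, one_pos, fun t ht n => ?_⟩
    have hWle : ∀ (k : ℕ) (x : Ω), W P env β k x ≤ 1 := by
      intro k x
      cases k with
      | zero => simp [W]
      | succ k =>
          haveI : IsEmpty (Fin (k+1) → Fin 0 × Bool) :=
            ⟨fun f => (f 0).1.elim0⟩
          have hzero : W P env β (k+1) x = 0 := by
            rw [W, Finset.univ_eq_empty, Finset.sum_empty, mul_zero]
          rw [hzero]; norm_num
    have hempty : {x : Ω | t < ⨆ j : Fin (n+1), W P env β (j:ℕ) x} = ∅ := by
      ext x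
      simp only [Set.mem_setOf_eq, Set.mem_empty_iff_false, iff_false, not_lt]
      calc ⨆ j : Fin (n+1), W P env β (j:ℕ) x ≤ 1 := ciSup_le fun j => hWle _ x
        _ ≤ t := ht.le
    rw [hempty, measure_empty]
    exact zero_le
  · obtain ⟨K₀, hK₁, hK⟩ := exists_K henv hβ hd hUI
    have hK₀pos : (0:ℝ) < K₀ := by linarith
    refine ⟨1/2, by norm_num, 1/(32*K₀), by positivity, fun t ht n => ?_⟩
    set A : ℕ → Set Ω :=
      fun j => {x | (∀ k < j, W P env β k x ≤ t) ∧ t < W P env β j x} with hA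
    have hAmeas : ∀ j, MeasurableSet (A j) := by
      intro j
      have h1 : A j = (⋂ k ∈ Set.Iio j, {x | W P env β k x ≤ t})
          ∩ {x | t < W P env β j x} := by
        ext x; simp [hA, Set.mem_iInter]
      rw [h1]
      exact (MeasurableSet.biInter (Set.to_countable _) fun k _ =>
        measurableSet_le (measurable_W' P henv.meas β k) measurable_const).inter
        (measurableSet_lt measurable_const (measurable_W' P henv.meas β j))
    set B : Set Ω := {x | t * (1/2) < W P env β n x} with hB
    have hBmeas : MeasurableSet B :=
      measurableSet_lt measurable_const (measurable_W' P henv.meas β n)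
    have hcover : {x | t < ⨆ j : Fin (n+1), W P env β (j:ℕ) x}
        ⊆ ⋃ j ∈ Finset.range (n+1), A j := by
      intro x hx
      have hbdd : BddAbove (Set.range fun j : Fin (n+1) => W P env β (j:ℕ) x) :=
        (Set.finite_range _).bddAbove
      obtain ⟨j, hj⟩ := (lt_ciSup_iff hbdd).1 hx
      have hex : ∃ k : ℕ, t < W P env β k x := ⟨j, hj⟩
      have hmem : Nat.find hex ∈ Finset.range (n+1) := by
        refine Finset.mem_range.2 ?_
        have h1 : Nat.find hex ≤ (j : ℕ) := Nat.find_min' hex hj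
        have := j.isLt
        omega
      have hxA : x ∈ A (Nat.find hex) :=
        ⟨fun k hk => not_lt.1 (Nat.find_min hex hk), Nat.find_spec hex⟩
      exact Set.mem_biUnion hmem hxA
    have hpd : (↑(Finset.range (n+1)) : Set ℕ).PairwiseDisjoint (fun j => A j ∩ B) := by
      intro i _ j _ hij
      refine Set.disjoint_left.2 fun x hxi hxj => ?_
      rcases lt_or_gt_of_ne hij with h | h
      · exact absurd hxi.1.2 (not_lt.2 (hxj.1.1 i h))
      · exact absurd hxj.1.2 (not_lt.2 (hxi.1.1 j h))
    have hperj : ∀ j ∈ Finset.range (n+1),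
        ENNReal.ofReal (1/(32*K₀)) * P (A j) ≤ P (A j ∩ B) := by
      intro j hj
      have hjn : j ≤ n := by
        have := Finset.mem_range.1 hj; omega
      have h := per_j henv hβ hd hK₁ hK ht j (n - j)
      rwa [show j + (n - j) = n from by omega] at h
    have hne : ENNReal.ofReal (1/(32*K₀)) ≠ 0 := by
      rw [Ne, ENNReal.ofReal_eq_zero, not_le]
      positivity
    have htop : ENNReal.ofReal (1/(32*K₀)) ≠ ⊤ := ENNReal.ofReal_ne_top
    have hstep : ∀ j ∈ Finset.range (n+1),
        P (A j) ≤ (ENNReal.ofReal (1/(32*K₀)))⁻¹ * P (A j ∩ B) := by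
      intro j hj
      calc P (A j)
          = (ENNReal.ofReal (1/(32*K₀)))⁻¹ * (ENNReal.ofReal (1/(32*K₀)) * P (A j)) := by
            rw [← mul_assoc, ENNReal.inv_mul_cancel hne htop, one_mul]
        _ ≤ (ENNReal.ofReal (1/(32*K₀)))⁻¹ * P (A j ∩ B) :=
            mul_le_mul_right (hperj j hj) _
    have hBunion : ∑ j ∈ Finset.range (n+1), P (A j ∩ B) ≤ P B := by
      rw [← measure_biUnion_finset hpd (fun j _ => (hAmeas j).inter hBmeas)]
      exact measure_mono (Set.iUnion₂_subset fun j _ => Set.inter_subset_right)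
    calc P {x | t < ⨆ j : Fin (n+1), W P env β (j:ℕ) x}
        ≤ P (⋃ j ∈ Finset.range (n+1), A j) := measure_mono hcover
      _ ≤ ∑ j ∈ Finset.range (n+1), P (A j) := measure_biUnion_finset_le _ _
      _ ≤ ∑ j ∈ Finset.range (n+1), (ENNReal.ofReal (1/(32*K₀)))⁻¹ * P (A j ∩ B) :=
          Finset.sum_le_sum hstep
      _ = (ENNReal.ofReal (1/(32*K₀)))⁻¹ * ∑ j ∈ Finset.range (n+1), P (A j ∩ B) := by
          rw [Finset.mul_sum]
      _ ≤ (ENNReal.ofReal (1/(32*K₀)))⁻¹ * P B := mul_le_mul_right hBunion _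
      _ = ENNReal.ofReal ((1/(32*K₀))⁻¹) * P B := by
          rw [ENNReal.ofReal_inv_of_pos (by positivity)]



end DirectedPolymer
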